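/- (Helly's theorem in the plane) Let F be a finite family of at least 3 convex subsets of ℝ². If every 3 members of F have a common point, then all members of F have a common point. -/
import Mathlib

/-- Helly's theorem in the plane: a finite family of at least 3 convex subsets of ℝ²,
every 3 of which have a common point, has a common point. -/
theorem helly_plane {ι : Type*} [Fintype ι] (hcard : 3 ≤ Fintype.card ι)
    (F : ι → Set (ℝ × ℝ)) (hconv : ∀ i, Convex ℝ (F i))
    (htriple : ∀ i j k, (F i ∩ F j ∩ F k).Nonempty) :
    (⋂ i, F i).Nonempty := by
  classical
  have hrank : Module.finrank ℝ (ℝ × ℝ) = 2 := by simp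
  have h := Convex.helly_theorem (𝕜 := ℝ) (F := F) (s := Finset.univ)
    (by simpa [hrank] using hcard) (fun i _ => hconv i) ?_
  · simpa using h
  · intro I _ hI
    rw [hrank] at hI
    obtain ⟨i, j, k, hij, hik, hjk, hIeq⟩ := Finset.card_eq_three.mp hI
    obtain ⟨x, hxij, hxk⟩ := htriple i j k
    exact ⟨x, by
      simp only [hIeq, Set.mem_iInter, Finset.mem_insert, Finset.mem_singleton]
      rintro a (rfl | rfl | rfl)
      exacts [hxij.1, hxij.2, hxk]⟩
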